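/- Let p > 1 and let ρ(ζ) = exp(e^{2ζ}/4 − ((p+3)/(p−1))ζ), with weighted measure dμ = ρ(ζ)dζ on ℝ. Let w : ℝ → ℝ be continuously differentiable with ∫_ℝ w(ζ)² dμ(ζ) < ∞ and ∫_ℝ w'(ζ)² dμ(ζ) < ∞. Then there exists R₀ > 0 such that for all R ≥ R₀: ∫_R^∞ w(ζ)² dμ(ζ) ≤ (e^{−2R}/2) ∫_R^∞ w'(ζ)² dμ(ζ). -/

import Mathlib

open Real Set Filter MeasureTheory Topology

set_option maxHeartbeats 1000000 in
/-- weighted Poincaré inequality at `+∞` for the weight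
`ρ(ζ) = exp(e^{2ζ}/4 − ((p+3)/(p−1))ζ)`: for `w ∈ H¹(ℝ, dμ)`, there is `R₀ > 0` such that for
all `R ≥ R₀`, `∫_R^∞ w² dμ ≤ (e^{−2R}/2) ∫_R^∞ (w')² dμ`. -/
theorem stmt_3 (p : ℝ) (hp : 1 < p)
    (ρ : ℝ → ℝ)
    (hρ : ∀ ζ, ρ ζ = Real.exp (Real.exp (2 * ζ) / 4 - ((p + 3) / (p - 1)) * ζ))
    (w : ℝ → ℝ) (hw : ContDiff ℝ 1 w)
    (hw2 : Integrable (fun ζ => (w ζ) ^ 2 * ρ ζ))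
    (hw2' : Integrable (fun ζ => (deriv w ζ) ^ 2 * ρ ζ)) :
    ∃ R₀ > 0, ∀ R ≥ R₀,
      ∫ ζ in Ici R, (w ζ) ^ 2 * ρ ζ ≤
        Real.exp (-2 * R) / 2 * ∫ ζ in Ici R, (deriv w ζ) ^ 2 * ρ ζ := by
  set a : ℝ := (p + 3) / (p - 1) with ha_def
  have ha : 0 < a := div_pos (by linarith) (by linarith)
  have hρ' : ρ = fun ζ => Real.exp (Real.exp (2 * ζ) / 4 - a * ζ) := funext hρ
  have hρpos : ∀ ζ, 0 < ρ ζ := fun ζ => by rw [hρ]; exact Real.exp_pos _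
  have hρcont : Continuous ρ := by rw [hρ']; fun_prop
  -- derivative of ρ
  have hρderiv : ∀ ζ, HasDerivAt ρ ((Real.exp (2 * ζ) / 2 - a) * ρ ζ) ζ := by
    intro ζ
    rw [hρ']
    have h2 : HasDerivAt (fun ζ : ℝ => 2 * ζ) 2 ζ := by
      simpa using (hasDerivAt_id ζ).const_mul 2
    have h1 : HasDerivAt (fun ζ : ℝ => Real.exp (2 * ζ) / 4 - a * ζ)
        (Real.exp (2 * ζ) / 2 - a) ζ := by
      have : HasDerivAt (fun ζ : ℝ => Real.exp (2 * ζ) / 4 - a * ζ) (Real.exp (2 * ζ) * 2 / 4 - a * 1) ζ :=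
        (h2.exp.div_const 4).sub ((hasDerivAt_id ζ).const_mul a)
      convert this using 1
      ring
    have := h1.exp
    simpa [mul_comm] using this
  have hwd : ∀ ζ, HasDerivAt w (deriv w ζ) ζ :=
    fun ζ => (hw.differentiable one_ne_zero ζ).hasDerivAt
  have hwcont : Continuous w := hw.continuous
  have hw'cont : Continuous (deriv w) := hw.continuous_deriv le_rfl
  -- abbreviations
  set F : ℝ → ℝ := fun ζ => w ζ ^ 2 * ρ ζ with hF_def
  set c : ℝ → ℝ := fun ζ => 2 * w ζ * deriv w ζ * ρ ζ with hc_def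
  set q : ℝ → ℝ := fun ζ => w ζ ^ 2 * ((Real.exp (2 * ζ) / 2 - a) * ρ ζ) with hq_def
  have hccont : Continuous c := by fun_prop
  have hqcont : Continuous q := by fun_prop
  have hFderiv : ∀ ζ, HasDerivAt F (c ζ + q ζ) ζ := by
    intro ζ
    have := ((hwd ζ).pow 2).mul (hρderiv ζ)
    refine this.congr_deriv ?_
    simp only [hc_def, hq_def, Pi.pow_apply]
    try ring
  -- integrability of the cross term
  have hc_int : Integrable c := by
    refine Integrable.mono' (hw2.add hw2') (hccont.aestronglyMeasurable) ?_
    filter_upwards with ζ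
    have h0 := (hρpos ζ).le
    simp only [hc_def, hF_def, Pi.add_apply, Real.norm_eq_abs]
    rw [abs_le]
    constructor <;> nlinarith [sq_nonneg (w ζ - deriv w ζ), sq_nonneg (w ζ + deriv w ζ)]
  have habs_int : Integrable (fun ζ => |c ζ|) := hc_int.abs
  -- the threshold
  set R₀ : ℝ := Real.log (max (4 * a) 128) with hR₀_def
  have hmaxpos : (0 : ℝ) < max (4 * a) 128 := lt_of_lt_of_le (by norm_num) (le_max_right _ _)
  have hR₀pos : 0 < R₀ := Real.log_pos (lt_of_lt_of_le (by norm_num) (le_max_right _ _))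
  have hRbig : ∀ R ≥ R₀, 4 * a ≤ Real.exp (2 * R) ∧ 128 ≤ Real.exp (2 * R) := by
    intro R hR
    have h1 : Real.exp R₀ = max (4 * a) 128 := Real.exp_log hmaxpos
    have h2 : max (4 * a) 128 ≤ Real.exp R := h1 ▸ Real.exp_le_exp.mpr hR
    have h3 : (128 : ℝ) ≤ Real.exp R := le_trans (le_max_right _ _) h2
    have h4 : 4 * a ≤ Real.exp R := le_trans (le_max_left _ _) h2
    have h5 : Real.exp (2 * R) = Real.exp R * Real.exp R := by
      rw [two_mul, Real.exp_add]
    constructor <;> nlinarith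
  -- q is nonneg past R₀
  have hq_nonneg : ∀ ζ ≥ R₀, 0 ≤ q ζ := by
    intro ζ hζ
    have h1 := (hRbig R₀ le_rfl).1
    have h2 : Real.exp (2 * R₀) ≤ Real.exp (2 * ζ) := Real.exp_le_exp.mpr (by linarith)
    have h3 := (hρpos ζ).le
    have h4 := sq_nonneg (w ζ)
    have : 0 ≤ Real.exp (2 * ζ) / 2 - a := by nlinarith
    positivity
  -- Step A : F → 0 at +∞
  have hF0 : Tendsto F atTop (𝓝 0) := by
    rw [Metric.tendsto_atTop]
    intro ε hε
    have htail : Tendsto (fun T => ∫ t in R₀..T, |c t|) atTop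
        (𝓝 (∫ t in Ioi R₀, |c t|)) :=
      intervalIntegral_tendsto_integral_Ioi R₀ habs_int.integrableOn tendsto_id
    obtain ⟨M, hM⟩ := (Metric.tendsto_atTop.mp htail) (ε / 2) (half_pos hε)
    set M' := max M R₀ with hM'_def
    have hM'R₀ : R₀ ≤ M' := le_max_right _ _
    have hMd : dist (∫ t in R₀..M', |c t|) (∫ t in Ioi R₀, |c t|) < ε / 2 :=
      hM M' (le_max_left _ _)
    have hsplit : (∫ t in Ioi R₀, |c t|) =
        (∫ t in Ioc R₀ M', |c t|) + ∫ t in Ioi M', |c t| := by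
      rw [← MeasureTheory.setIntegral_union (Set.Ioc_disjoint_Ioi le_rfl)
        measurableSet_Ioi habs_int.integrableOn habs_int.integrableOn,
        Set.Ioc_union_Ioi_eq_Ioi hM'R₀]
    have hIoc : (∫ t in R₀..M', |c t|) = ∫ t in Ioc R₀ M', |c t| :=
      intervalIntegral.integral_of_le hM'R₀
    rw [Real.dist_eq, hIoc, abs_lt] at hMd
    have htail' : (∫ t in Ioi M', |c t|) < ε / 2 := by linarith
    refine ⟨M', fun T hT => ?_⟩
    rw [Real.dist_eq, sub_zero]
    have hFT_nonneg : 0 ≤ F T := by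
      have := (hρpos T).le; have := sq_nonneg (w T); positivity
    rw [abs_of_nonneg hFT_nonneg]
    by_contra hcon
    push_neg at hcon
    -- then F ≥ ε/2 on [T, ∞), contradicting integrability of F
    have hlower : ∀ S ≥ T, ε / 2 ≤ F S := by
      intro S hS
      have hFTC : (∫ t in T..S, (c t + q t)) = F S - F T :=
        intervalIntegral.integral_eq_sub_of_hasDerivAt
          (fun t _ => hFderiv t) (((hccont.add hqcont).intervalIntegrable T S))
      have hsplit2 : (∫ t in T..S, (c t + q t)) =
          (∫ t in T..S, c t) + ∫ t in T..S, q t :=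
        intervalIntegral.integral_add (hccont.intervalIntegrable T S)
          (hqcont.intervalIntegrable T S)
      have hq_pos : 0 ≤ ∫ t in T..S, q t := by
        apply intervalIntegral.integral_nonneg hS
        intro t ht
        exact hq_nonneg t (le_trans (le_trans hM'R₀ hT) ht.1)
      have hcabs : |∫ t in T..S, c t| ≤ ∫ t in T..S, |c t| :=
        intervalIntegral.abs_integral_le_integral_abs hS
      have hcineq : (∫ t in T..S, |c t|) ≤ ∫ t in Ioi M', |c t| := by
        rw [intervalIntegral.integral_of_le hS]
        apply setIntegral_mono_set habs_int.integrableOn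
        · filter_upwards with t using abs_nonneg _
        · exact ((Set.Ioc_subset_Ioi_self).trans (Set.Ioi_subset_Ioi hT)).eventuallyLE
      have hclow : -(ε / 2) ≤ ∫ t in T..S, c t := by
        have h1 := neg_abs_le (∫ t in T..S, c t)
        linarith
      nlinarith [hFTC, hsplit2]
    have hconst : IntegrableOn (fun _ : ℝ => ε / 2) (Ioi T) volume := by
      refine Integrable.mono' hw2.integrableOn aestronglyMeasurable_const ?_
      filter_upwards [ae_restrict_mem measurableSet_Ioi] with S hS
      rw [Real.norm_eq_abs, abs_of_pos (half_pos hε)]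
      exact hlower S hS.le
    have := integrable_const_iff.mp hconst
    rcases this with h | h
    · exact absurd h (by positivity)
    · have h := h.measure_univ_lt_top
      rw [Measure.restrict_apply_univ, Real.volume_Ioi] at h
      exact absurd h (by simp)
  -- Step B : the main estimate
  refine ⟨R₀, hR₀pos, fun R hR => ?_⟩
  rw [MeasureTheory.integral_Ici_eq_integral_Ioi, MeasureTheory.integral_Ici_eq_integral_Ioi]
  set K : ℝ := 4 * Real.exp (-(2 * R)) with hK_def
  have hKpos : 0 < K := by positivity
  have hexp1 : Real.exp (-(2 * R)) * Real.exp (2 * R) = 1 := by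
    rw [← Real.exp_add]; simp
  have hRb := hRbig R hR
  have hV : ∀ ζ, R ≤ ζ → Real.exp (2 * R) / 4 ≤ Real.exp (2 * ζ) / 2 - a := by
    intro ζ hζ
    have h2 : Real.exp (2 * R) ≤ Real.exp (2 * ζ) := Real.exp_le_exp.mpr (by linarith)
    nlinarith [hRb.1]
  set g : ℝ → ℝ := fun ζ => F ζ - ∫ t in R..ζ, c t with hg_def
  have hg_deriv : ∀ ζ, HasDerivAt g (q ζ) ζ := by
    intro ζ
    have h1 : HasDerivAt (fun x => ∫ t in R..x, c t) (c ζ) ζ :=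
      intervalIntegral.integral_hasDerivAt_right (hccont.intervalIntegrable R ζ)
        (hccont.stronglyMeasurableAtFilter _ _) hccont.continuousAt
    have h2 := (hFderiv ζ).sub h1
    exact h2.congr_deriv (by ring)
  have hg_tendsto : Tendsto g atTop (𝓝 (0 - ∫ t in Ioi R, c t)) :=
    hF0.sub (intervalIntegral_tendsto_integral_Ioi R hc_int.integrableOn tendsto_id)
  have hq_nonneg' : ∀ ζ ∈ Ioi R, 0 ≤ q ζ := fun ζ hζ =>
    hq_nonneg ζ (le_trans hR (le_of_lt hζ))
  have hq_int : IntegrableOn q (Ioi R) :=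
    integrableOn_Ioi_deriv_of_nonneg' (fun x _ => hg_deriv x) hq_nonneg' hg_tendsto
  have hq_eq : (∫ ζ in Ioi R, q ζ) = (0 - ∫ t in Ioi R, c t) - g R :=
    integral_Ioi_of_hasDerivAt_of_nonneg' (fun x _ => hg_deriv x) hq_nonneg' hg_tendsto
  have hgR : g R = F R := by simp [hg_def]
  have hFR : 0 ≤ F R := by
    have h2 := (hρpos R).le
    have h3 := sq_nonneg (w R)
    simp only [hF_def]
    positivity
  set A : ℝ := ∫ ζ in Ioi R, w ζ ^ 2 * ρ ζ with hA_def
  set B : ℝ := ∫ ζ in Ioi R, (deriv w ζ) ^ 2 * ρ ζ with hB_def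
  have hB_nonneg : 0 ≤ B := by
    apply setIntegral_nonneg measurableSet_Ioi
    intro ζ _
    have := (hρpos ζ).le
    positivity
  -- Step 1 : A ≤ K * ∫ q
  have step1 : A ≤ K * ∫ ζ in Ioi R, q ζ := by
    rw [← MeasureTheory.integral_const_mul]
    apply setIntegral_mono_on hw2.integrableOn (hq_int.const_mul K) measurableSet_Ioi
    intro ζ hζ
    have h1 := hV ζ (le_of_lt hζ)
    have h2 := (hρpos ζ).le
    have h3 := sq_nonneg (w ζ)
    have hK1 : K * (Real.exp (2 * R) / 4) = 1 := by
      rw [hK_def]; linear_combination hexp1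
    have hKV : ρ ζ ≤ K * ((Real.exp (2 * ζ) / 2 - a) * ρ ζ) := by
      nlinarith [hK1, mul_nonneg (mul_nonneg hKpos.le h2) (sub_nonneg.mpr h1)]
    calc w ζ ^ 2 * ρ ζ ≤ w ζ ^ 2 * (K * ((Real.exp (2 * ζ) / 2 - a) * ρ ζ)) :=
          mul_le_mul_of_nonneg_left hKV h3
      _ = K * q ζ := by simp only [hq_def]; ring
  -- Step 2 : ∫ q ≤ (1/(2K)) A + 2K B
  set L : ℝ := 1 / (2 * K) with hL_def
  have hLpos : 0 < L := by positivity
  have hL1 : L * (2 * K) = 1 := by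
    rw [hL_def]; field_simp
  have step2 : (∫ ζ in Ioi R, q ζ) ≤ L * A + 2 * K * B := by
    have hle : (∫ ζ in Ioi R, q ζ) ≤ ∫ ζ in Ioi R, (-c ζ) := by
      rw [hq_eq, hgR, MeasureTheory.integral_neg]
      linarith
    have hle2 : (∫ ζ in Ioi R, (-c ζ)) ≤
        ∫ ζ in Ioi R, (L * (w ζ ^ 2 * ρ ζ) + 2 * K * ((deriv w ζ) ^ 2 * ρ ζ)) := by
      apply MeasureTheory.integral_mono hc_int.neg.integrableOn
        (((hw2.const_mul L).add (hw2'.const_mul (2 * K))).integrableOn)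
      intro ζ
      have h2 := (hρpos ζ).le
      have h4 := sq_nonneg (w ζ + 2 * K * deriv w ζ)
      have hK0 : K ≠ 0 := hKpos.ne'
      simp only [Pi.neg_apply, Pi.add_apply, hc_def, hF_def, hL_def]
      have hiden : 1 / (2 * K) * (w ζ ^ 2 * ρ ζ) + 2 * K * (deriv w ζ ^ 2 * ρ ζ)
          + 2 * w ζ * deriv w ζ * ρ ζ
          = 1 / (2 * K) * ((w ζ + 2 * K * deriv w ζ) ^ 2 * ρ ζ) := by
        field_simp
        ring
      have hnn : 0 ≤ 1 / (2 * K) * ((w ζ + 2 * K * deriv w ζ) ^ 2 * ρ ζ) :=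
        mul_nonneg (by positivity) (mul_nonneg h4 h2)
      linarith [hiden, hnn]
    have heq : (∫ ζ in Ioi R, (L * (w ζ ^ 2 * ρ ζ) + 2 * K * ((deriv w ζ) ^ 2 * ρ ζ)))
        = L * A + 2 * K * B := by
      rw [MeasureTheory.integral_add ((hw2.const_mul L).integrableOn)
        ((hw2'.const_mul (2 * K)).integrableOn),
        MeasureTheory.integral_const_mul, MeasureTheory.integral_const_mul]
    linarith
  -- combine
  have hKL : K * L = 1 / 2 := by rw [hL_def]; field_simp
  have hcomb : A ≤ A / 2 + 2 * K ^ 2 * B := by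
    have := mul_le_mul_of_nonneg_left step2 hKpos.le
    calc A ≤ K * ∫ ζ in Ioi R, q ζ := step1
      _ ≤ K * (L * A + 2 * K * B) := this
      _ = (K * L) * A + 2 * K ^ 2 * B := by ring
      _ = A / 2 + 2 * K ^ 2 * B := by rw [hKL]; ring
  have hA4 : A ≤ 4 * K ^ 2 * B := by linarith
  have hfin : 4 * K ^ 2 ≤ Real.exp (-2 * R) / 2 := by
    have he : Real.exp (-2 * R) = Real.exp (-(2 * R)) := by ring_nf
    rw [he, hK_def]
    have hepos := Real.exp_pos (-(2 * R))
    nlinarith [hRb.2, hexp1, hepos.le]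
  calc A ≤ 4 * K ^ 2 * B := hA4
    _ ≤ Real.exp (-2 * R) / 2 * B := mul_le_mul_of_nonneg_right hfin hB_nonneg
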